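/- Let V₁, ..., V_n be independent random variables with continuous CDFs, σ a uniformly random permutation, τ a threshold with p = P(max_i V_i ≤ τ) ∈ (0,1), and T the stopping time of the single-threshold rule at level τ. Then for every i with P(V_i > τ) > 0, P(σ(T) = i | V_i > τ) ≥ (1-p)/(-ln p). -/

import Mathlib

open MeasureTheory ProbabilityTheory

/-- Stopping time of the time-threshold algorithm (1-based time): the first time `k ∈ [1,n]`
at which the revealed value `V_{σ(k)}` strictly exceeds the threshold `τ k`, and `n+1`
(meaning "never stops") if no such time exists. -/
noncomputable def stopT {Ω : Type*} {n : ℕ} (V : Fin n → Ω → ℝ) (τ : ℕ → ℝ)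
    (σ : Ω → Equiv.Perm (Fin n)) (ω : Ω) : ℕ :=
  sInf ({k : ℕ | ∃ j : Fin n, (j : ℕ) + 1 = k ∧ τ k < V (σ ω j) ω} ∪ {n + 1})


section auxlemmas

lemma aux_stopT_char {Ω : Type*} {n : ℕ} (V : Fin n → Ω → ℝ) (τ0 : ℝ)
    (σ : Ω → Equiv.Perm (Fin n)) (ω : Ω) (i : Fin n) (hVi : τ0 < V i ω) :
    (∃ j : Fin n, (j : ℕ) + 1 = stopT V (fun _ => τ0) σ ω ∧ σ ω j = i)
      ↔ ∀ j, τ0 < V j ω → ((σ ω)⁻¹ i ≤ (σ ω)⁻¹ j) := by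
  set U : Set ℕ := {k : ℕ | ∃ j : Fin n, (j : ℕ) + 1 = k ∧ τ0 < V (σ ω j) ω} ∪ {n + 1}
    with hU
  have hsd : stopT V (fun _ => τ0) σ ω = sInf U := rfl
  have hne : U.Nonempty := ⟨n + 1, Or.inr rfl⟩
  constructor
  · rintro ⟨j, hj, hσj⟩ j' hj'
    have hk' : ((σ ω)⁻¹ j' : ℕ) + 1 ∈ U :=
      Or.inl ⟨(σ ω)⁻¹ j', rfl, by rw [show (σ ω) ((σ ω)⁻¹ j') = j' from Equiv.apply_symm_apply _ _]; exact hj'⟩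
    have h1 : sInf U ≤ ((σ ω)⁻¹ j' : ℕ) + 1 := Nat.sInf_le hk'
    rw [← hsd, ← hj] at h1
    have hji : (σ ω)⁻¹ i = j := by rw [← hσj, show (σ ω)⁻¹ (σ ω j) = j from Equiv.symm_apply_apply _ _]
    rw [Fin.le_def, hji]
    omega
  · intro h
    refine ⟨(σ ω)⁻¹ i, ?_, Equiv.apply_symm_apply _ _⟩
    have hkU : (((σ ω)⁻¹ i : Fin n) : ℕ) + 1 ∈ U :=
      Or.inl ⟨(σ ω)⁻¹ i, rfl, by rw [show (σ ω) ((σ ω)⁻¹ i) = i from Equiv.apply_symm_apply _ _]; exact hVi⟩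
    rw [hsd]
    refine le_antisymm (le_csInf hne ?_) (Nat.sInf_le hkU)
    rintro m (⟨j'', hj'', hV''⟩ | rfl)
    · have := h (σ ω j'') hV''
      rw [show (σ ω)⁻¹ (σ ω j'') = j'' from Equiv.symm_apply_apply _ _, Fin.le_def] at this
      omega
    · have := (((σ ω)⁻¹ i : Fin n)).isLt
      omega

lemma aux_perm_count {n : ℕ} (S : Finset (Fin n)) (i : Fin n) (hi : i ∈ S) :
    (Finset.univ.filter (fun π : Equiv.Perm (Fin n) => ∀ j ∈ S, π⁻¹ i ≤ π⁻¹ j)).card * S.card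
      = n.factorial := by
  classical
  set P : Fin n → Finset (Equiv.Perm (Fin n)) :=
    fun a => Finset.univ.filter (fun π => ∀ j ∈ S, π⁻¹ a ≤ π⁻¹ j) with hP
  have hswapS : ∀ a ∈ S, ∀ j ∈ S, Equiv.swap a i j ∈ S := by
    intro a ha j hj
    rcases eq_or_ne j a with rfl | hja
    · rw [Equiv.swap_apply_left]; exact hi
    rcases eq_or_ne j i with rfl | hji
    · rw [Equiv.swap_apply_right]; exact ha
    · rw [Equiv.swap_apply_of_ne_of_ne hja hji]; exact hj
  have hmem : ∀ a ∈ S, ∀ π ∈ P a, Equiv.swap a i * π ∈ P i := by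
    intro a ha π hπ
    simp only [hP, Finset.mem_filter, Finset.mem_univ, true_and] at hπ ⊢
    intro j hj
    have h1 : (Equiv.swap a i * π)⁻¹ = π⁻¹ * Equiv.swap a i := by
      rw [mul_inv_rev, Equiv.swap_inv]
    rw [h1]
    simp only [Equiv.Perm.mul_apply, Equiv.swap_apply_left, Equiv.swap_apply_right]
    exact hπ _ (hswapS a ha j hj)
  have hmem' : ∀ a ∈ S, ∀ π ∈ P i, Equiv.swap a i * π ∈ P a := by
    intro a ha π hπ
    simp only [hP, Finset.mem_filter, Finset.mem_univ, true_and] at hπ ⊢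
    intro j hj
    have h1 : (Equiv.swap a i * π)⁻¹ = π⁻¹ * Equiv.swap a i := by
      rw [mul_inv_rev, Equiv.swap_inv]
    rw [h1]
    simp only [Equiv.Perm.mul_apply, Equiv.swap_apply_left, Equiv.swap_apply_right]
    exact hπ _ (hswapS a ha j hj)
  have hinv : ∀ (a : Fin n) (π : Equiv.Perm (Fin n)),
      Equiv.swap a i * (Equiv.swap a i * π) = π := by
    intro a π
    rw [← mul_assoc, Equiv.swap_mul_self, one_mul]
  have hcardeq : ∀ a ∈ S, (P a).card = (P i).card := by
    intro a ha
    exact Finset.card_bij' (fun π _ => Equiv.swap a i * π) (fun π _ => Equiv.swap a i * π)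
      (fun π hπ => hmem a ha π hπ) (fun π hπ => hmem' a ha π hπ)
      (fun π _ => hinv a π) (fun π _ => hinv a π)
  have hdisj : ∀ a ∈ S, ∀ b ∈ S, a ≠ b → Disjoint (P a) (P b) := by
    intro a ha b hb hab
    rw [Finset.disjoint_left]
    intro π hπa hπb
    simp only [hP, Finset.mem_filter, Finset.mem_univ, true_and] at hπa hπb
    exact hab (π⁻¹.injective (le_antisymm (hπa b hb) (hπb a ha)))
  have hcover : S.biUnion P = Finset.univ := by
    apply Finset.eq_univ_of_forall
    intro π
    obtain ⟨a, ha, hmin⟩ := S.exists_min_image (fun j => π⁻¹ j) ⟨i, hi⟩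
    exact Finset.mem_biUnion.2 ⟨a, ha, by
      simp only [hP, Finset.mem_filter, Finset.mem_univ, true_and]; exact hmin⟩
  have hcard : ∑ a ∈ S, (P a).card = n.factorial := by
    rw [← Finset.card_biUnion hdisj, hcover, Finset.card_univ, Fintype.card_perm,
      Fintype.card_fin]
  rw [← hcard, Finset.sum_congr rfl hcardeq, Finset.sum_const, smul_eq_mul, mul_comm]

lemma aux_exp_integral (c : ℝ) (hc : c ≠ 0) :
    ∫ x in (0:ℝ)..1, Real.exp (c * (1 - x)) = (Real.exp c - 1) / c := by
  have h1 : (∫ x in (0:ℝ)..1, Real.exp (c * (1 - x)))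
      = ∫ x in (1-(1:ℝ))..(1-0), Real.exp (c * x) :=
    intervalIntegral.integral_comp_sub_left (fun y => Real.exp (c * y)) 1
  have h2 : (∫ x in (0:ℝ)..1, Real.exp (x * c)) = c⁻¹ • ∫ x in (0*c)..(1*c), Real.exp x :=
    intervalIntegral.integral_comp_mul_right Real.exp hc
  simp only [zero_mul, one_mul, integral_exp, Real.exp_zero, smul_eq_mul] at h2
  rw [h1]
  simp only [sub_self, sub_zero]
  have h3 : (∫ x in (0:ℝ)..1, Real.exp (c * x)) = ∫ x in (0:ℝ)..1, Real.exp (x * c) := by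
    simp only [mul_comm]
  rw [h3, h2, inv_mul_eq_div]

lemma aux_analytic {ι : Type*} [DecidableEq ι] (t : Finset ι) (a : ι → ℝ)
    (ha0 : ∀ j ∈ t, 0 < a j) (ha1 : ∀ j ∈ t, a j ≤ 1)
    (p : ℝ) (hp0 : 0 < p) (hp1 : p < 1) (hpr : p ≤ ∏ j ∈ t, a j) :
    (1 - p) / (-Real.log p) ≤
      ∑ S ∈ t.powerset, ((∏ j ∈ S, (1 - a j)) * ∏ j ∈ t \ S, a j) / (S.card + 1) := by
  set c := Real.log p with hc
  have hcneg : c < 0 := Real.log_neg hp0 hp1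
  have hcne : c ≠ 0 := ne_of_lt hcneg
  set f : ℝ → ℝ := fun x => ∏ j ∈ t, (a j + (1 - a j) * x) with hf
  have hfc : Continuous f := by
    apply continuous_finset_prod
    intro j _
    continuity
  have hA : (∑ S ∈ t.powerset, ((∏ j ∈ S, (1 - a j)) * ∏ j ∈ t \ S, a j) / (S.card + 1))
      = ∫ x in (0:ℝ)..1, f x := by
    have hterm : ∀ S ∈ t.powerset,
        ((∏ j ∈ S, (1 - a j)) * ∏ j ∈ t \ S, a j) / (S.card + 1)
          = ∫ x in (0:ℝ)..1, ((∏ j ∈ S, (1 - a j)) * x ^ S.card * ∏ j ∈ t \ S, a j) := by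
      intro S _
      rw [intervalIntegral.integral_mul_const, intervalIntegral.integral_const_mul,
        integral_pow]
      push_cast
      ring
    rw [Finset.sum_congr rfl hterm, ← intervalIntegral.integral_finset_sum]
    · congr 1
      ext x
      rw [hf]
      have := Finset.prod_add (fun j => (1 - a j) * x) a t
      simp only [add_comm] at this ⊢
      rw [this]
      refine Finset.sum_congr rfl fun S _ => ?_
      rw [Finset.prod_mul_distrib, Finset.prod_const]
    · intro S _
      apply Continuous.intervalIntegrable
      continuity
  have hC : (∫ x in (0:ℝ)..1, Real.exp (c * (1 - x))) = (1 - p) / (-c) := by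
    rw [aux_exp_integral c hcne, hc, Real.exp_log hp0]
    rw [div_neg, ← neg_div]
    congr 1
    ring
  have hB : ∀ x ∈ Set.Icc (0:ℝ) 1, Real.exp (c * (1 - x)) ≤ f x := by
    intro x hx
    obtain ⟨hx0, hx1⟩ := hx
    have h1x : (0:ℝ) ≤ 1 - x := by linarith
    have hexp : Real.exp (c * (1 - x)) = p ^ (1 - x) := by
      rw [Real.rpow_def_of_pos hp0, mul_comm]
    rw [hexp]
    have h2 : p ^ (1 - x) ≤ (∏ j ∈ t, a j) ^ (1 - x) :=
      Real.rpow_le_rpow hp0.le hpr h1x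
    refine h2.trans ?_
    rw [← Real.finset_prod_rpow t a (fun j hj => (ha0 j hj).le)]
    apply Finset.prod_le_prod
    · intro j hj
      exact Real.rpow_nonneg (ha0 j hj).le _
    · intro j hj
      have := Real.geom_mean_le_arith_mean2_weighted h1x hx0 (ha0 j hj).le zero_le_one
        (by ring)
      calc a j ^ (1 - x) = a j ^ (1 - x) * (1:ℝ) ^ x := by rw [Real.one_rpow, mul_one]
        _ ≤ (1 - x) * a j + x * 1 := this
        _ = a j + (1 - a j) * x := by ring
  rw [hA, ← hC]
  apply intervalIntegral.integral_mono_on zero_le_one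
  · apply Continuous.intervalIntegrable; continuity
  · exact hfc.intervalIntegrable _ _
  · exact hB

end auxlemmas

theorem stmt10 {Ω : Type*} [MeasurableSpace Ω] (μ : Measure Ω) [IsProbabilityMeasure μ]
    (n : ℕ) (hn : 0 < n) (V : Fin n → Ω → ℝ)
    (hVmeas : ∀ i, Measurable (V i))
    (hVcont : ∀ i, Continuous (fun t => (μ {ω | V i ω ≤ t}).toReal))
    (hVindep : iIndepFun V μ)
    (σ : Ω → Equiv.Perm (Fin n))
    (hσmeas : ∀ π, MeasurableSet {ω | σ ω = π})
    (hσunif : ∀ π, μ {ω | σ ω = π} = ((n.factorial : ENNReal))⁻¹)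
    (hindep : ∀ (π : Equiv.Perm (Fin n)) (A : Set (Fin n → ℝ)), MeasurableSet A →
      μ ({ω | σ ω = π} ∩ {ω | (fun i => V i ω) ∈ A})
        = μ {ω | σ ω = π} * μ {ω | (fun i => V i ω) ∈ A})
    (τ0 : ℝ)
    (p : ℝ) (hp : p = (μ {ω | ∀ i, V i ω ≤ τ0}).toReal) (hp0 : 0 < p) (hp1 : p < 1)
    (i : Fin n) (hi : 0 < (μ {ω | τ0 < V i ω}).toReal) :
    (μ ({ω | ∃ j : Fin n, (j : ℕ) + 1 = stopT V (fun _ => τ0) σ ω ∧ σ ω j = i}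
          ∩ {ω | τ0 < V i ω})).toReal / (μ {ω | τ0 < V i ω}).toReal
      ≥ (1 - p) / (-Real.log p) := by
  classical
  -- basic notation
  set q : Fin n → ℝ := fun j => (μ {ω | V j ω ≤ τ0}).toReal with hqdef
  -- the exceedance pattern events
  set A : Finset (Fin n) → Fin n → Set Ω :=
    fun S j => if j ∈ S then {ω | τ0 < V j ω} else {ω | V j ω ≤ τ0} with hAdef
  set E : Finset (Fin n) → Set Ω := fun S => ⋂ j, A S j with hEdef
  have hA_pre : ∀ S j, A S j = V j ⁻¹' (if j ∈ S then Set.Ioi τ0 else Set.Iic τ0) := by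
    intro S j
    by_cases h : j ∈ S <;> simp [hAdef, h, Set.preimage, Set.Ioi, Set.Iic] <;> rfl
  have hAmeas : ∀ S j, MeasurableSet (A S j) := by
    intro S j
    rw [hA_pre]
    exact (hVmeas j) (by by_cases h : j ∈ S <;> simp [h, measurableSet_Ioi, measurableSet_Iic])
  have hEmeas : ∀ S, MeasurableSet (E S) := fun S => MeasurableSet.iInter (hAmeas S)
  -- product formula for pattern events
  have hmE : ∀ S, μ (E S) = ∏ j, μ (A S j) := by
    intro S
    apply hVindep.meas_iInter
    intro j
    rw [hA_pre]
    refine ⟨if j ∈ S then Set.Ioi τ0 else Set.Iic τ0, ?_, rfl⟩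
    by_cases h : j ∈ S <;> simp [h]
  -- single coordinate probabilities
  have hQc : ∀ j, μ {ω | τ0 < V j ω} = 1 - μ {ω | V j ω ≤ τ0} := by
    intro j
    have hset : {ω | τ0 < V j ω} = {ω | V j ω ≤ τ0}ᶜ := by
      ext ω; simp [not_le]
    have hms : MeasurableSet {ω | V j ω ≤ τ0} := hVmeas j measurableSet_Iic
    rw [hset, measure_compl hms (measure_ne_top μ _), measure_univ]
  have hq1 : ∀ j, q j ≤ 1 := by
    intro j
    simpa [hqdef] using ENNReal.toReal_mono ENNReal.one_ne_top prob_le_one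
  have hQc_real : ∀ j, (μ {ω | τ0 < V j ω}).toReal = 1 - q j := by
    intro j
    rw [hQc j, ENNReal.toReal_sub_of_le prob_le_one (by simp), ENNReal.toReal_one]
  -- p as a product
  have hpprod : μ {ω | ∀ k, V k ω ≤ τ0} = ∏ j, μ {ω | V j ω ≤ τ0} := by
    have hset : {ω | ∀ k, V k ω ≤ τ0} = ⋂ j, V j ⁻¹' Set.Iic τ0 := by
      ext ω; simp [Set.mem_iInter, Set.mem_preimage]
    rw [hset]
    rw [hVindep.meas_iInter (fun j => ⟨Set.Iic τ0, measurableSet_Iic, rfl⟩)]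
    rfl
  have hpq : p = ∏ j, q j := by
    rw [hp, hpprod, ENNReal.toReal_prod]
  have hq0 : ∀ j, 0 < q j := by
    intro j
    rcases lt_or_ge 0 (q j) with h | h
    · exact h
    · exfalso
      have hqj : q j = 0 := le_antisymm h ENNReal.toReal_nonneg
      have : p = 0 := by
        rw [hpq]
        exact Finset.prod_eq_zero (Finset.mem_univ j) hqj
      linarith
  -- rewrite the numerator event
  have hG' : ({ω | ∃ j : Fin n, (j : ℕ) + 1 = stopT V (fun _ => τ0) σ ω ∧ σ ω j = i}
        ∩ {ω | τ0 < V i ω})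
      = {ω | τ0 < V i ω ∧ ∀ j, τ0 < V j ω → ((σ ω)⁻¹ i ≤ (σ ω)⁻¹ j)} := by
    ext ω
    simp only [Set.mem_inter_iff, Set.mem_setOf_eq]
    constructor
    · rintro ⟨hex, hVi⟩
      exact ⟨hVi, (aux_stopT_char V τ0 σ ω i hVi).1 hex⟩
    · rintro ⟨hVi, hord⟩
      exact ⟨(aux_stopT_char V τ0 σ ω i hVi).2 hord, hVi⟩
  -- membership in pattern events
  have hEmem : ∀ (S : Finset (Fin n)) (ω : Ω), ω ∈ E S ↔ ∀ j, (τ0 < V j ω ↔ j ∈ S) := by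
    intro S ω
    simp only [hEdef, Set.mem_iInter, hAdef]
    constructor
    · intro h j
      have hj := h j
      by_cases hc : j ∈ S
      · simp only [hc, if_true, Set.mem_setOf_eq] at hj
        simp [hc, hj]
      · simp only [hc, if_false, Set.mem_setOf_eq] at hj
        simp [hc, not_lt.2 hj]
    · intro h j
      by_cases hc : j ∈ S
      · simp only [hc, if_true, Set.mem_setOf_eq]
        exact (h j).2 hc
      · simp only [hc, if_false, Set.mem_setOf_eq]
        exact not_lt.1 (fun hlt => hc ((h j).1 hlt))
  have hEdisj : ∀ S S' : Finset (Fin n), S ≠ S' → Disjoint (E S) (E S') := by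
    intro S S' hne
    rw [Set.disjoint_left]
    intro ω h1 h2
    apply hne
    ext j
    rw [← (hEmem S ω).1 h1 j, (hEmem S' ω).1 h2 j]
  -- value-vector events
  set B : Equiv.Perm (Fin n) → Set (Fin n → ℝ) :=
    fun π => {v | τ0 < v i ∧ ∀ j, τ0 < v j → (π⁻¹ i ≤ π⁻¹ j)} with hBdef
  have hBmeas : ∀ π, MeasurableSet (B π) := by
    intro π
    have h1 : MeasurableSet {v : Fin n → ℝ | τ0 < v i} :=
      measurableSet_lt measurable_const (measurable_pi_apply i)
    have h2 : ∀ j : Fin n, MeasurableSet {v : Fin n → ℝ | τ0 < v j → (π⁻¹ i ≤ π⁻¹ j)} := by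
      intro j
      by_cases hc : (π⁻¹ i ≤ π⁻¹ j)
      · have : {v : Fin n → ℝ | τ0 < v j → (π⁻¹ i ≤ π⁻¹ j)} = Set.univ := by
          ext v; simp only [Set.mem_setOf_eq, Set.mem_univ, hc, implies_true]
        rw [this]; exact MeasurableSet.univ
      · have : {v : Fin n → ℝ | τ0 < v j → (π⁻¹ i ≤ π⁻¹ j)} = {v | v j ≤ τ0} := by
          ext v; simp only [Set.mem_setOf_eq, hc, imp_false, not_lt]
        rw [this]
        exact measurableSet_le (measurable_pi_apply j) measurable_const
    have hBeq : B π = {v : Fin n → ℝ | τ0 < v i} ∩ ⋂ j, {v | τ0 < v j → (π⁻¹ i ≤ π⁻¹ j)} := by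
      ext v; simp [hBdef, Set.mem_iInter]
    rw [hBeq]
    exact h1.inter (MeasurableSet.iInter h2)
  have hVpre_meas : ∀ π, MeasurableSet {ω | (fun k => V k ω) ∈ B π} := by
    intro π
    exact (measurable_pi_lambda _ (fun k => hVmeas k)) (hBmeas π)
  -- partition over the permutation
  have hcup : {ω | τ0 < V i ω ∧ ∀ j, τ0 < V j ω → ((σ ω)⁻¹ i ≤ (σ ω)⁻¹ j)}
      = ⋃ π ∈ (Finset.univ : Finset (Equiv.Perm (Fin n))),
          ({ω | σ ω = π} ∩ {ω | (fun k => V k ω) ∈ B π}) := by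
    ext ω
    simp only [Set.mem_iUnion, Set.mem_inter_iff, Set.mem_setOf_eq, Finset.mem_univ,
      exists_prop, true_and, hBdef]
    constructor
    · rintro ⟨h1, h2⟩; exact ⟨σ ω, rfl, h1, h2⟩
    · rintro ⟨π, rfl, h1, h2⟩; exact ⟨h1, h2⟩
  have hNsum1 : μ {ω | τ0 < V i ω ∧ ∀ j, τ0 < V j ω → ((σ ω)⁻¹ i ≤ (σ ω)⁻¹ j)}
      = ∑ π : Equiv.Perm (Fin n), μ ({ω | σ ω = π} ∩ {ω | (fun k => V k ω) ∈ B π}) := by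
    rw [hcup]
    apply measure_biUnion_finset
    · intro π _ π' _ hne
      apply Set.disjoint_left.mpr
      rintro ω ⟨h1, _⟩ ⟨h2, _⟩
      exact hne (h1.symm.trans h2)
    · intro π _
      exact (hσmeas π).inter (hVpre_meas π)
  have hNsum2 : ∀ π : Equiv.Perm (Fin n), μ ({ω | σ ω = π} ∩ {ω | (fun k => V k ω) ∈ B π})
      = ((n.factorial : ENNReal))⁻¹ * μ {ω | (fun k => V k ω) ∈ B π} := by
    intro π
    rw [hindep π (B π) (hBmeas π), hσunif π]
  -- decompose each value-event over patterns
  have hBdecomp : ∀ π : Equiv.Perm (Fin n), {ω | (fun k => V k ω) ∈ B π}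
      = ⋃ S ∈ Finset.univ.powerset.filter
            (fun S : Finset (Fin n) => i ∈ S ∧ ∀ j ∈ S, π⁻¹ i ≤ π⁻¹ j), E S := by
    intro π
    ext ω
    simp only [Set.mem_iUnion, Finset.mem_filter, Finset.mem_powerset, exists_prop, hBdef,
      Set.mem_setOf_eq]
    constructor
    · rintro ⟨h1, h2⟩
      refine ⟨Finset.univ.filter (fun j => τ0 < V j ω),
        ⟨Finset.filter_subset _ _, ?_, ?_⟩, ?_⟩
      · simp only [Finset.mem_filter, Finset.mem_univ, true_and]; exact h1
      · intro j hj
        simp only [Finset.mem_filter, Finset.mem_univ, true_and] at hj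
        exact h2 j hj
      · rw [hEmem]
        intro j
        simp only [Finset.mem_filter, Finset.mem_univ, true_and]
    · rintro ⟨S, ⟨_, hiS, hord⟩, hωE⟩
      have hpat := (hEmem S ω).1 hωE
      exact ⟨(hpat i).2 hiS, fun j hj => hord j ((hpat j).1 hj)⟩
  have hBsum : ∀ π : Equiv.Perm (Fin n), μ {ω | (fun k => V k ω) ∈ B π}
      = ∑ S ∈ Finset.univ.powerset.filter
            (fun S : Finset (Fin n) => i ∈ S ∧ ∀ j ∈ S, π⁻¹ i ≤ π⁻¹ j), μ (E S) := by
    intro π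
    rw [hBdecomp π]
    apply measure_biUnion_finset
    · intro S _ S' _ hne
      exact hEdisj S S' hne
    · intro S _
      exact hEmeas S
  -- the collection of patterns containing i, and permutation counts
  set SS : Finset (Finset (Fin n)) := Finset.univ.powerset.filter (fun S => i ∈ S) with hSS
  set cnt : Finset (Fin n) → ℕ := fun S =>
    (Finset.univ.filter (fun π : Equiv.Perm (Fin n) => ∀ j ∈ S, π⁻¹ i ≤ π⁻¹ j)).card
    with hcnt
  have hswap : (∑ π : Equiv.Perm (Fin n), ∑ S ∈ Finset.univ.powerset.filter
        (fun S : Finset (Fin n) => i ∈ S ∧ ∀ j ∈ S, π⁻¹ i ≤ π⁻¹ j), μ (E S))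
      = ∑ S ∈ SS, (cnt S : ENNReal) * μ (E S) := by
    calc (∑ π : Equiv.Perm (Fin n), ∑ S ∈ Finset.univ.powerset.filter
          (fun S : Finset (Fin n) => i ∈ S ∧ ∀ j ∈ S, π⁻¹ i ≤ π⁻¹ j), μ (E S))
        = ∑ π : Equiv.Perm (Fin n), ∑ S ∈ Finset.univ.powerset,
            if i ∈ S ∧ (∀ j ∈ S, π⁻¹ i ≤ π⁻¹ j) then μ (E S) else 0 :=
          Finset.sum_congr rfl fun π _ => Finset.sum_filter _ _
      _ = ∑ S ∈ Finset.univ.powerset, ∑ π : Equiv.Perm (Fin n),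
            if i ∈ S ∧ (∀ j ∈ S, π⁻¹ i ≤ π⁻¹ j) then μ (E S) else 0 := Finset.sum_comm
      _ = ∑ S ∈ Finset.univ.powerset,
            if i ∈ S then (cnt S : ENNReal) * μ (E S) else 0 := by
          refine Finset.sum_congr rfl fun S _ => ?_
          by_cases hiS : i ∈ S
          · simp only [hiS, true_and, if_true]
            rw [← Finset.sum_filter, Finset.sum_const, nsmul_eq_mul]
          · simp [hiS]
      _ = ∑ S ∈ SS, (cnt S : ENNReal) * μ (E S) := (Finset.sum_filter _ _).symm
  -- the numerator, exactly
  have hNfinal : μ ({ω | ∃ j : Fin n, (j : ℕ) + 1 = stopT V (fun _ => τ0) σ ω ∧ σ ω j = i}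
        ∩ {ω | τ0 < V i ω})
      = (n.factorial : ENNReal)⁻¹ * ∑ S ∈ SS, (cnt S : ENNReal) * μ (E S) := by
    rw [hG', hNsum1]
    rw [Finset.sum_congr rfl (fun π _ => (hNsum2 π).trans (by rw [hBsum π]))]
    rw [← Finset.mul_sum, hswap]
  -- convert to real numbers
  have hfin : ∀ S : Finset (Fin n), μ (E S) ≠ ⊤ := fun S => measure_ne_top μ _
  have hNreal : (μ ({ω | ∃ j : Fin n, (j : ℕ) + 1 = stopT V (fun _ => τ0) σ ω ∧ σ ω j = i}
        ∩ {ω | τ0 < V i ω})).toReal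
      = (n.factorial : ℝ)⁻¹ * ∑ S ∈ SS, (cnt S : ℝ) * (μ (E S)).toReal := by
    rw [hNfinal, ENNReal.toReal_mul, ENNReal.toReal_inv, ENNReal.toReal_natCast]
    congr 1
    rw [ENNReal.toReal_sum (fun S _ => ENNReal.mul_ne_top (ENNReal.natCast_ne_top _) (hfin S))]
    exact Finset.sum_congr rfl fun S _ => by rw [ENNReal.toReal_mul, ENNReal.toReal_natCast]
  -- real value of pattern probabilities
  have hmreal : ∀ S : Finset (Fin n), (μ (E S)).toReal
      = (∏ j ∈ S, (1 - q j)) * ∏ j ∈ Finset.univ \ S, q j := by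
    intro S
    rw [hmE S, ENNReal.toReal_prod]
    have hAval : ∀ j, (μ (A S j)).toReal = if j ∈ S then 1 - q j else q j := by
      intro j
      by_cases hc : j ∈ S
      · simp only [hAdef, hc, if_true]; exact hQc_real j
      · simp only [hAdef, hc, if_false]; rfl
    rw [Finset.prod_congr rfl (fun j _ => hAval j), Finset.prod_ite]
    congr 1
    · apply Finset.prod_congr _ (fun _ _ => rfl)
      ext j; simp
    · apply Finset.prod_congr _ (fun _ _ => rfl)
      rw [Finset.sdiff_eq_filter]
  -- reindex over subsets of univ.erase i
  set t : Finset (Fin n) := Finset.univ.erase i with htdef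
  have hterm : ∀ S ∈ SS, (n.factorial : ℝ)⁻¹ * ((cnt S : ℝ) * (μ (E S)).toReal)
      = (1 - q i) * (((∏ j ∈ S.erase i, (1 - q j)) * ∏ j ∈ t \ S.erase i, q j)
          / (((S.erase i).card : ℝ) + 1)) := by
    intro S hS
    have hiS : i ∈ S := (Finset.mem_filter.1 hS).2
    have hcardn : (S.erase i).card + 1 = S.card := Finset.card_erase_add_one hiS
    have hcard : ((S.erase i).card : ℝ) + 1 = (S.card : ℝ) := by exact_mod_cast hcardn
    have hcnt_eq : (cnt S : ℝ) * (S.card : ℝ) = (n.factorial : ℝ) := by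
      exact_mod_cast congrArg (Nat.cast : ℕ → ℝ) (aux_perm_count S i hiS)
    have hSpos : (0:ℝ) < (S.card : ℝ) := by
      have := Finset.card_pos.2 ⟨i, hiS⟩
      exact_mod_cast this
    have hfacpos : (0:ℝ) < (n.factorial : ℝ) := by exact_mod_cast n.factorial_pos
    have hsdiff : Finset.univ \ S = t \ S.erase i := by
      ext j
      simp only [Finset.mem_sdiff, Finset.mem_univ, true_and, htdef, Finset.mem_erase]
      by_cases hji : j = i
      · subst hji; simp [hiS]
      · simp [hji]
    have hprodS : (∏ j ∈ S, (1 - q j)) = (1 - q i) * ∏ j ∈ S.erase i, (1 - q j) :=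
      (Finset.mul_prod_erase S _ hiS).symm
    have hinv : (n.factorial : ℝ)⁻¹ * (cnt S : ℝ) = ((S.card : ℝ))⁻¹ := by
      field_simp
      linarith [hcnt_eq]
    rw [hmreal S, hprodS, hsdiff, hcard]
    calc (n.factorial : ℝ)⁻¹ * ((cnt S : ℝ) *
            ((1 - q i) * (∏ j ∈ S.erase i, (1 - q j)) * ∏ j ∈ t \ S.erase i, q j))
        = ((n.factorial : ℝ)⁻¹ * (cnt S : ℝ)) *
            ((1 - q i) * (∏ j ∈ S.erase i, (1 - q j)) * ∏ j ∈ t \ S.erase i, q j) := by ring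
      _ = ((S.card : ℝ))⁻¹ *
            ((1 - q i) * (∏ j ∈ S.erase i, (1 - q j)) * ∏ j ∈ t \ S.erase i, q j) := by
          rw [hinv]
      _ = (1 - q i) * (((∏ j ∈ S.erase i, (1 - q j)) * ∏ j ∈ t \ S.erase i, q j)
            / (S.card : ℝ)) := by
          rw [div_eq_inv_mul]
          ring
  have hNkey : (μ ({ω | ∃ j : Fin n, (j : ℕ) + 1 = stopT V (fun _ => τ0) σ ω ∧ σ ω j = i}
        ∩ {ω | τ0 < V i ω})).toReal
      = (1 - q i) * ∑ S' ∈ t.powerset,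
          ((∏ j ∈ S', (1 - q j)) * ∏ j ∈ t \ S', q j) / ((S'.card : ℝ) + 1) := by
    rw [hNreal, Finset.mul_sum, Finset.sum_congr rfl hterm, Finset.mul_sum]
    apply Finset.sum_nbij' (fun S => S.erase i) (fun S' => insert i S')
    · intro S hS
      have hiS : i ∈ S := (Finset.mem_filter.1 hS).2
      rw [Finset.mem_powerset, htdef]
      intro j hj
      rw [Finset.mem_erase] at hj ⊢
      exact ⟨hj.1, Finset.mem_univ j⟩
    · intro S' hS'
      rw [hSS, Finset.mem_filter]
      exact ⟨Finset.mem_powerset.2 (Finset.subset_univ _), Finset.mem_insert_self i S'⟩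
    · intro S hS
      exact Finset.insert_erase (Finset.mem_filter.1 hS).2
    · intro S' hS'
      apply Finset.erase_insert
      intro hiS'
      have := Finset.mem_powerset.1 hS' hiS'
      rw [htdef, Finset.mem_erase] at this
      exact this.1 rfl
    · intro S hS
      rfl
  -- final computation
  have hD : (μ {ω | τ0 < V i ω}).toReal = 1 - q i := hQc_real i
  have hDpos : (0:ℝ) < 1 - q i := by rw [← hD]; exact hi
  have hple : p ≤ ∏ j ∈ t, q j := by
    have hpe : p = q i * ∏ j ∈ t, q j := by
      rw [hpq, htdef, ← Finset.mul_prod_erase Finset.univ q (Finset.mem_univ i)]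
    have hrnn : (0:ℝ) ≤ ∏ j ∈ t, q j := Finset.prod_nonneg fun j _ => (hq0 j).le
    calc p = q i * ∏ j ∈ t, q j := hpe
      _ ≤ 1 * ∏ j ∈ t, q j := mul_le_mul_of_nonneg_right (hq1 i) hrnn
      _ = ∏ j ∈ t, q j := one_mul _
  rw [ge_iff_le, hNkey, hD, mul_comm, mul_div_assoc, div_self (ne_of_gt hDpos), mul_one]
  exact aux_analytic t q (fun j _ => hq0 j) (fun j _ => hq1 j) p hp0 hp1 hple
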